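/- Let F be a free group of rank m ≥ 2 and φ ∈ Aut(F) with [φ] of finite order k in Out(F), so φ^k = ad_{f₀⁻¹} for some f₀ ∈ F. Then the center of the mapping torus F ⋊_φ ⟨t⟩ is the infinite cyclic subgroup generated by t^k f₀. -/

import Mathlib

open SemidirectProduct Multiplicative

/-- The mapping torus `F ⋊_φ ⟨t⟩` of an automorphism `φ` of `F`: the semidirect
product `F ⋊ ℤ` in which the stable letter `t` satisfies `t⁻¹ x t = φ x`. -/
abbrev MappingTorus {F : Type*} [Group F] (φ : MulAut F) : Type _ :=
  SemidirectProduct F (Multiplicative ℤ) ((zpowersHom (MulAut F)) φ⁻¹)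

/-- The stable letter `t` of the mapping torus. -/
def stableLetter {F : Type*} [Group F] (φ : MulAut F) : MappingTorus φ :=
  inr (ofAdd 1)

private lemma free_comm_eq_one {m : ℕ} (hm : 2 ≤ m) (w : FreeGroup (Fin m))
    (h : ∀ y : FreeGroup (Fin m), y * w = w * y) : w = 1 := by
  by_contra hw
  have hL : w.toWord ≠ [] := fun H => hw (FreeGroup.toWord_eq_nil_iff.mp H)
  obtain ⟨⟨i₀, b₀⟩, L', hLeq⟩ := List.exists_cons_of_ne_nil hL
  obtain ⟨j, hj⟩ : ∃ j : Fin m, j ≠ i₀ := by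
    rcases eq_or_ne i₀ ⟨0, by omega⟩ with h0 | h0
    · exact ⟨⟨1, by omega⟩, by simp [h0, Fin.ext_iff]⟩
    · exact ⟨⟨0, by omega⟩, fun hc => h0 hc.symm⟩
  have h1 : (FreeGroup.of j * w).toWord = (j, true) :: w.toWord := by
    conv_lhs => rw [show w = FreeGroup.mk w.toWord from (FreeGroup.mk_toWord).symm]
    rw [show (FreeGroup.of j : FreeGroup (Fin m)) = FreeGroup.mk [(j, true)] from rfl,
      FreeGroup.mul_mk, FreeGroup.toWord_mk, List.singleton_append, FreeGroup.reduce.cons,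
      FreeGroup.reduce_toWord, hLeq]
    simp [hj]
  rw [h (FreeGroup.of j)] at h1
  have h2 := FreeGroup.toWord_mul_sublist w (FreeGroup.of j)
  rw [h1, FreeGroup.toWord_of] at h2
  have h3 := h2.eq_of_length (by simp)
  rw [hLeq] at h3
  simp only [List.cons_append, List.cons.injEq] at h3
  exact hj (congrArg Prod.fst h3.1)

private lemma conj_inj' {m : ℕ} (hm : 2 ≤ m) {a b : FreeGroup (Fin m)}
    (h : MulAut.conj a = MulAut.conj b) : a = b := by
  have key : ∀ y, y * (b⁻¹ * a) = (b⁻¹ * a) * y := by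
    intro y
    have h1 := congrFun (congrArg
      (fun (ψ : MulAut (FreeGroup (Fin m))) => (ψ : FreeGroup (Fin m) → FreeGroup (Fin m))) h) y
    simp only [MulAut.conj_apply] at h1
    have h2 : b⁻¹ * (a * y * a⁻¹) * a = b⁻¹ * (b * y * b⁻¹) * a := by rw [h1]
    calc y * (b⁻¹ * a) = b⁻¹ * (b * y * b⁻¹) * a := by group
      _ = b⁻¹ * (a * y * a⁻¹) * a := h2.symm
      _ = (b⁻¹ * a) * y := by group
  have h0 := free_comm_eq_one hm _ key
  exact (inv_mul_eq_one.mp h0).symm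

private lemma fix_zpow {F : Type*} [Group F] (ψ : MulAut F) (x : F) (h : ψ x = x) (n : ℤ) :
    (ψ ^ n) x = x := by
  have hn : ∀ p : ℕ, (ψ ^ p) x = x := by
    intro p
    induction p with
    | zero => simp
    | succ p ih => rw [pow_succ, MulAut.mul_apply, h, ih]
  rcases n with p | p
  · simpa using hn p
  · rw [zpow_negSucc]
    have h2 := hn (p + 1)
    conv_lhs => rw [← h2]
    simp

/-- for `F` free of rank `m ≥ 2` and `[φ]` of order `k` in `Out(F)`,
with `φ^k = ad_{f₀⁻¹}`, the center of `F ⋊_φ ⟨t⟩` is the infinite cyclic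
subgroup generated by `t^k f₀`. -/
theorem center_eq_zpowers {m : ℕ} (hm : 2 ≤ m)
    (φ : MulAut (FreeGroup (Fin m))) (f₀ : FreeGroup (Fin m)) (k : ℕ) (hk : 1 ≤ k)
    (hφk : φ ^ k = MulAut.conj f₀)
    (hmin : ∀ j : ℕ, 1 ≤ j → j < k → ¬ ∃ g, φ ^ j = MulAut.conj g) :
    Subgroup.center (MappingTorus φ)
        = Subgroup.zpowers ((stableLetter φ) ^ k * inl f₀) ∧
      ∀ n : ℤ, ((stableLetter φ) ^ k * inl f₀) ^ n = 1 → n = 0 := by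
  -- characterization of central elements
  have hmem : ∀ g : MappingTorus φ, g ∈ Subgroup.center (MappingTorus φ) ↔
      (MulAut.conj g.left = φ ^ (toAdd g.right) ∧ φ g.left = g.left) := by
    intro g
    rw [Subgroup.mem_center_iff]
    constructor
    · intro hc
      have hA : ∀ y : FreeGroup (Fin m),
          y * g.left = g.left * ((φ⁻¹ ^ (toAdd g.right)) y) := by
        intro y
        have := congrArg SemidirectProduct.left (hc (inl y))
        simpa using this
      constructor
      · have hB : φ⁻¹ ^ (toAdd g.right) = (MulAut.conj g.left)⁻¹ := by
          ext y
          rw [← map_inv, MulAut.conj_apply, inv_inv, mul_assoc, hA y, inv_mul_cancel_left]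
        rw [inv_zpow] at hB
        rw [← inv_inj, ← hB]
      · have := congrArg SemidirectProduct.left (hc (inr (ofAdd 1)))
        simp at this
        rw [← this, MulEquiv.apply_symm_apply]
        exact this.symm
    · rintro ⟨h1, h2⟩ h
      ext
      · simp only [mul_left, zpowersHom_apply]
        have hfix : φ⁻¹ g.left = g.left := by
          rw [← h2, ← MulAut.mul_apply, inv_mul_cancel, MulAut.one_apply, h2]
        rw [fix_zpow φ⁻¹ g.left hfix (toAdd h.right), inv_zpow, ← h1, ← map_inv,
          MulAut.conj_apply]
        group
      · simp only [mul_right]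
        exact congrArg toAdd (mul_comm _ _)
  -- φ fixes f₀
  have hφf₀ : φ f₀ = f₀ := by
    apply conj_inj' hm
    ext y
    rw [MulAut.conj_apply, MulAut.conj_apply]
    have hy : φ (φ⁻¹ y) = y := by rw [← MulAut.mul_apply, mul_inv_cancel, MulAut.one_apply]
    have h2 : φ ((φ ^ k) (φ⁻¹ y)) = (φ ^ k) y := by
      have hcm : (φ ^ k) (φ⁻¹ y) = φ⁻¹ ((φ ^ k) y) := by
        rw [← MulAut.mul_apply, ← MulAut.mul_apply]
        congr 1
        group
      rw [hcm, ← MulAut.mul_apply, mul_inv_cancel, MulAut.one_apply]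
    calc φ f₀ * y * (φ f₀)⁻¹ = φ (f₀ * φ⁻¹ y * f₀⁻¹) := by rw [map_mul, map_mul, map_inv, hy]
      _ = φ ((φ ^ k) (φ⁻¹ y)) := by rw [hφk, MulAut.conj_apply]
      _ = (φ ^ k) y := h2
      _ = f₀ * y * f₀⁻¹ := by rw [hφk, MulAut.conj_apply]
  have hφinvf₀ : φ⁻¹ f₀ = f₀ := by
    conv_lhs => rw [← hφf₀]
    rw [← MulAut.mul_apply, inv_mul_cancel, MulAut.one_apply]
  set z := stableLetter φ ^ k * inl f₀ with hzdef
  have hsl : (stableLetter φ) ^ k = (inr (ofAdd (k : ℤ)) : MappingTorus φ) := by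
    rw [stableLetter, ← map_pow]
    congr 1
    rw [← ofAdd_nsmul]
    simp
  have hzl : z.left = f₀ := by
    rw [hzdef, hsl]
    simp only [mul_left, left_inr, left_inl, right_inr, zpowersHom_apply, one_mul, toAdd_ofAdd]
    exact fix_zpow _ _ hφinvf₀ _
  have hzr : z.right = ofAdd (k : ℤ) := by
    rw [hzdef, hsl]
    simp
  have hzc : z ∈ Subgroup.center (MappingTorus φ) := by
    rw [hmem]
    refine ⟨?_, by rw [hzl]; exact hφf₀⟩
    rw [hzl, hzr, toAdd_ofAdd, zpow_natCast, hφk]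
  constructor
  · apply le_antisymm
    · -- center ≤ zpowers z
      intro g hg
      obtain ⟨h1, h2⟩ := (hmem g).mp hg
      set n := toAdd g.right with hngdef
      set q := n / (k : ℤ) with hq
      set r := n % (k : ℤ) with hr
      have hkz : (0 : ℤ) < (k : ℤ) := by exact_mod_cast hk
      have hr0 : 0 ≤ r := Int.emod_nonneg n (by omega)
      have hrk : r < (k : ℤ) := Int.emod_lt_of_pos n hkz
      have hnkq : n = (k : ℤ) * q + r := (Int.mul_ediv_add_emod n (k : ℤ)).symm
      have hφr : φ ^ r = MulAut.conj (g.left * f₀ ^ (-q)) := by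
        have hs : φ ^ r = φ ^ n * (φ ^ (k : ℤ)) ^ (-q) := by
          rw [← zpow_mul, ← zpow_add]
          congr 1
          rw [mul_neg]
          omega
        rw [hs, ← h1, zpow_natCast, hφk, ← map_zpow, ← map_mul]
      rcases eq_or_lt_of_le hr0 with hre | hre
      · -- r = 0
        have hone : MulAut.conj (g.left * f₀ ^ (-q)) = MulAut.conj (1 : FreeGroup (Fin m)) := by
          rw [← hφr, ← hre, zpow_zero, map_one]
        have hgl : g.left * f₀ ^ (-q) = 1 := conj_inj' hm hone
        have hgl' : g.left = f₀ ^ q := by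
          rw [mul_eq_one_iff_eq_inv.mp hgl, ← zpow_neg, neg_neg]
        have hcomm : Commute (inr (ofAdd (k : ℤ)) : MappingTorus φ) (inl f₀) := by
          show _ * _ = _ * _
          ext
          · simp only [mul_left, left_inr, left_inl, right_inr, right_inl, zpowersHom_apply,
              one_mul, mul_one, toAdd_ofAdd, map_one, MulAut.one_apply]
            exact fix_zpow _ _ hφinvf₀ _
          · simp [mul_comm]
        have hφinvf₀q : φ⁻¹ (f₀ ^ q) = f₀ ^ q := by rw [map_zpow, hφinvf₀]
        refine ⟨q, ?_⟩
        show z ^ q = g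
        have hoa : (ofAdd (k : ℤ)) ^ q = ofAdd (q * (k : ℤ)) := by
          rw [← ofAdd_zsmul, smul_eq_mul]
        have hzq : (inr (ofAdd (k : ℤ)) : MappingTorus φ) ^ q = inr ((ofAdd (k : ℤ)) ^ q) :=
          (map_zpow (inr : Multiplicative ℤ →* MappingTorus φ) _ q).symm
        have hflq : (inl f₀ : MappingTorus φ) ^ q = inl (f₀ ^ q) :=
          (map_zpow (inl : FreeGroup (Fin m) →* MappingTorus φ) f₀ q).symm
        rw [hzdef, hsl, hcomm.mul_zpow, hzq, hflq, hoa]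
        ext
        · simp only [mul_left, left_inr, left_inl, right_inr, one_mul, zpowersHom_apply,
            toAdd_ofAdd]
          rw [hgl']
          exact fix_zpow _ _ hφinvf₀q _
        · simp only [mul_right, right_inr, right_inl, mul_one]
          rw [show q * (k : ℤ) = n by rw [mul_comm]; omega, hngdef, ofAdd_toAdd]
      · -- 0 < r : contradiction with minimality
        exfalso
        refine hmin r.toNat (by omega) (by omega) ⟨g.left * f₀ ^ (-q), ?_⟩
        rw [← hφr, ← zpow_natCast]
        congr 1
        omega
    · rw [Subgroup.zpowers_le]
      exact hzc
  · intro n hn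
    have := congrArg SemidirectProduct.rightHom hn
    rw [map_zpow, hzdef, map_mul, rightHom_inl, mul_one, map_pow] at this
    simp only [stableLetter, rightHom_inr, map_one] at this
    have h2 : ((ofAdd (1 : ℤ)) ^ k) ^ n = 1 := this
    rw [← ofAdd_nsmul, nsmul_eq_mul, mul_one, ← ofAdd_zsmul, smul_eq_mul, ofAdd_eq_one] at h2
    have hkne : (k : ℤ) ≠ 0 := by omega
    exact (mul_eq_zero.mp h2).resolve_right hkne
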